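/- Let C = C_{b,D} with increasing enumeration (c_n) and δ = |D|. Then for every i ≥ 1, every N ≥ 1 and all real α, β: | E_{n∈[N]} e(c_n α + s_b(c_n) β) − E_{n∈[N/δ^i]} e(c_n b^i α + s_b(c_n) β) · E_{ℓ∈[δ^i]} e(c_ℓ α + s_b(c_ℓ) β) | ≪ δ^i / N, where E denotes the average over the indicated range. -/

import Mathlib

/-- `e(t) = exp(2πit)`. -/
noncomputable def eR (t : ℝ) : ℂ := Complex.exp (((2 * Real.pi * t : ℝ) : ℂ) * Complex.I)

namespace CantorSplit

lemma eR_add (s t : ℝ) : eR (s + t) = eR s * eR t := by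
  unfold eR
  rw [← Complex.exp_add]
  congr 1
  push_cast
  ring

lemma norm_eR (t : ℝ) : ‖eR t‖ = 1 := Complex.norm_exp_ofReal_mul_I _

def P (b : ℕ) (D : Finset ℕ) (m : ℕ) : Prop := ∀ d ∈ Nat.digits b m, d ∈ D

instance (b : ℕ) (D : Finset ℕ) : DecidablePred (P b D) := fun _ => List.decidableBAll _ _

variable {b : ℕ} {D : Finset ℕ}

lemma P_zero : P b D 0 := by simp [P]

lemma P_iff (hb : 1 < b) (h0 : 0 ∈ D) (m : ℕ) :
    P b D m ↔ P b D (m / b) ∧ m % b ∈ D := by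
  rcases Nat.eq_zero_or_pos m with rfl | hm
  · simp [P, h0]
  · rw [show P b D m ↔ ∀ d ∈ Nat.digits b m, d ∈ D from Iff.rfl, Nat.digits_def' hb hm]
    simp only [List.mem_cons, forall_eq_or_imp]
    exact ⟨fun h => ⟨h.2, h.1⟩, fun h => ⟨h.2, h.1⟩⟩

lemma P_of (hb : 1 < b) (h0 : 0 ∈ D) {x r : ℕ} (hx : P b D x) (hr : r ∈ D) (hrb : r < b) :
    P b D (b * x + r) := by
  rw [P_iff hb h0]
  have h1 : (b * x + r) / b = x := by
    rw [Nat.mul_add_div (by omega), Nat.div_eq_of_lt hrb, add_zero]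
  have h2 : (b * x + r) % b = r := by
    rw [Nat.mul_add_mod, Nat.mod_eq_of_lt hrb]
  rw [h1, h2]; exact ⟨hx, hr⟩

lemma filter_range_b (hDsub : ∀ d ∈ D, d < b) :
    (Finset.range b).filter (· ∈ D) = D := by
  ext d
  simp only [Finset.mem_filter, Finset.mem_range]
  exact ⟨fun h => h.2, fun h => ⟨hDsub d h, h⟩⟩

lemma P_small (hb : 1 < b) (h0 : 0 ∈ D) {m : ℕ} (hm : m < b) : P b D m ↔ m ∈ D := by
  rw [P_iff hb h0, Nat.div_eq_of_lt hm, Nat.mod_eq_of_lt hm]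
  simp [P_zero]

lemma count_mul (hb : 1 < b) (h0 : 0 ∈ D) (hDsub : ∀ d ∈ D, d < b) (x : ℕ) :
    Nat.count (P b D) (b * x) = D.card * Nat.count (P b D) x := by
  induction x with
  | zero => simp
  | succ x ih =>
    have hx1 : b * (x + 1) = b * x + b := by ring
    rw [hx1, Nat.count_add, ih, Nat.count_succ]
    have hcongr : Nat.count (fun k => P b D (b * x + k)) b
        = if P b D x then D.card else 0 := by
      rw [Nat.count_eq_card_filter_range]
      have hkey : ∀ k ∈ Finset.range b, (P b D (b * x + k) ↔ (P b D x ∧ k ∈ D)) := by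
        intro k hk
        rw [Finset.mem_range] at hk
        have h1 : (b * x + k) / b = x := by
          rw [Nat.mul_add_div (by omega), Nat.div_eq_of_lt hk, add_zero]
        have h2 : (b * x + k) % b = k := by
          rw [Nat.mul_add_mod, Nat.mod_eq_of_lt hk]
        rw [P_iff hb h0, h1, h2]
      by_cases hx : P b D x
      · rw [if_pos hx]
        have : (Finset.range b).filter (fun k => P b D (b * x + k))
            = (Finset.range b).filter (· ∈ D) := by
          apply Finset.filter_congr
          intro k hk
          simp only [hkey k hk, hx, true_and]
        rw [this, filter_range_b hDsub]
      · rw [if_neg hx]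
        rw [Finset.card_eq_zero, Finset.filter_eq_empty_iff]
        intro k hk h
        exact hx ((hkey k hk).mp h).1
    rw [hcongr]
    by_cases hx : P b D x <;> simp [hx, Nat.mul_add, Nat.mul_succ]

lemma count_mul_add (hb : 1 < b) (h0 : 0 ∈ D) (hDsub : ∀ d ∈ D, d < b) {x r : ℕ}
    (hx : P b D x) (hr : r ≤ b) :
    Nat.count (P b D) (b * x + r)
      = D.card * Nat.count (P b D) x + ((Finset.range r).filter (· ∈ D)).card := by
  rw [Nat.count_add, count_mul hb h0 hDsub]
  congr 1
  rw [Nat.count_eq_card_filter_range]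
  congr 1
  apply Finset.filter_congr
  intro k hk
  rw [Finset.mem_range] at hk
  have hkb : k < b := lt_of_lt_of_le hk hr
  have h1 : (b * x + k) / b = x := by
    rw [Nat.mul_add_div (by omega), Nat.div_eq_of_lt hkb, add_zero]
  have h2 : (b * x + k) % b = k := by
    rw [Nat.mul_add_mod, Nat.mod_eq_of_lt hkb]
  rw [P_iff hb h0, h1, h2]
  simp [hx]

lemma sum_base (hb : 1 < b) {x r : ℕ} (hrb : r < b) :
    (Nat.digits b (b * x + r)).sum = (Nat.digits b x).sum + r := by
  rcases Nat.eq_zero_or_pos (b * x + r) with h | h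
  · have hx : x = 0 := by
      rcases Nat.eq_zero_or_pos x with rfl | hx; · rfl
      · exfalso; nlinarith
    have hr : r = 0 := by omega
    simp [hx, hr]
  · rw [Nat.digits_def' hb h]
    have h1 : (b * x + r) / b = x := by
      rw [Nat.mul_add_div (by omega), Nat.div_eq_of_lt hrb, add_zero]
    have h2 : (b * x + r) % b = r := by
      rw [Nat.mul_add_mod, Nat.mod_eq_of_lt hrb]
    rw [h1, h2, List.sum_cons]
    omega

lemma sum_small (hb : 1 < b) {r : ℕ} (hrb : r < b) : (Nat.digits b r).sum = r := by
  rcases Nat.eq_zero_or_pos r with rfl | hr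
  · simp
  · rw [Nat.digits_of_lt b r (by omega) hrb]; simp

end CantorSplit

open CantorSplit

/-- Splitting estimate for the exponential sums along the increasing
enumeration `(c_n)` of the Cantor set `C_{b,D}` (with `0 ∈ D`, `δ = |D|`): for all
`i ≥ 1`, `N ≥ 1` and real `α, β`, the average `E_{n<N} e(c_n α + s_b(c_n) β)` differs
from `E_{n<⌊N/δ^i⌋} e(c_n b^i α + s_b(c_n) β) · E_{ℓ<δ^i} e(c_ℓ α + s_b(c_ℓ) β)`
by `O(δ^i / N)`. -/
theorem cantor_exponential_sum_splitting
    (b : ℕ) (hb : 3 ≤ b) (D : Finset ℕ) (hD : 2 ≤ D.card) (hDb : D.card < b)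
    (hDsub : ∀ d ∈ D, d < b) (h0 : 0 ∈ D)
    (c : ℕ → ℕ) (hc : StrictMono c)
    (hcr : Set.range c = {m : ℕ | ∀ d ∈ Nat.digits b m, d ∈ D}) :
    ∃ C : ℝ, 0 < C ∧ ∀ i N : ℕ, 1 ≤ i → 1 ≤ N → ∀ α β : ℝ,
      ‖((N : ℂ)⁻¹ * ∑ n ∈ Finset.range N,
            eR (α * (c n : ℝ) + β * ((Nat.digits b (c n)).sum : ℝ)))
        - ((((N / D.card ^ i : ℕ) : ℂ)⁻¹ * ∑ n ∈ Finset.range (N / D.card ^ i),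
              eR ((b : ℝ) ^ i * α * (c n : ℝ) + β * ((Nat.digits b (c n)).sum : ℝ)))
            * (((D.card ^ i : ℕ) : ℂ)⁻¹ * ∑ l ∈ Finset.range (D.card ^ i),
              eR (α * (c l : ℝ) + β * ((Nat.digits b (c l)).sum : ℝ))))‖
        ≤ C * (D.card : ℝ) ^ i / (N : ℝ) := by
  classical
  have hb1 : 1 < b := by omega
  set δ := D.card with hδ
  have hδpos : 0 < δ := by omega
  -- identify c with Nat.nth
  have hcr' : Set.range c = setOf (P b D) := hcr
  have hPinf : (setOf (P b D)).Infinite := by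
    rw [← hcr']
    exact Set.infinite_of_injective_forall_mem hc.injective (fun n => Set.mem_range_self n)
  have hceq : c = Nat.nth (P b D) :=
    (hc.range_inj (Nat.nth_strictMono hPinf)).mp
      (hcr'.trans (Nat.range_nth_of_infinite hPinf).symm)
  have hcP : ∀ n, P b D (c n) := fun n => by
    rw [hceq]; exact Nat.nth_mem_of_infinite hPinf n
  have hcount : ∀ n, Nat.count (P b D) (c n) = n := fun n => by
    rw [hceq]; exact Nat.count_nth_of_infinite hPinf n
  have hc0 : c 0 = 0 := by rw [hceq]; exact Nat.nth_zero_of_zero P_zero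
  have hcountb : Nat.count (P b D) b = δ := by
    have h := count_mul_add hb1 h0 hDsub (x := 0) (r := b) P_zero le_rfl
    simpa [filter_range_b hDsub] using h
  have hclt : ∀ r < δ, c r < b := fun r hr => by
    rw [hceq]; exact Nat.nth_lt_of_lt_count (by rw [hcountb]; exact hr)
  have hcD : ∀ r < δ, c r ∈ D := fun r hr =>
    (P_small hb1 h0 (hclt r hr)).mp (hcP r)
  have hcntD : ∀ r < δ, ((Finset.range (c r)).filter (· ∈ D)).card = r := by
    intro r hr
    have hfe : (Finset.range (c r)).filter (· ∈ D)
        = (Finset.range (c r)).filter (P b D) := by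
      apply Finset.filter_congr
      intro m hm
      rw [Finset.mem_range] at hm
      rw [P_small hb1 h0 (lt_trans hm (hclt r hr))]
    rw [hfe, ← Nat.count_eq_card_filter_range, hcount r]
  -- the base splitting identity
  have base : ∀ m r, r < δ → c (δ * m + r) = b * c m + c r := by
    intro m r hr
    have hPnew : P b D (b * c m + c r) := P_of hb1 h0 (hcP m) (hcD r hr) (hclt r hr)
    have hcnt : Nat.count (P b D) (b * c m + c r) = δ * m + r := by
      rw [count_mul_add hb1 h0 hDsub (hcP m) (le_of_lt (hclt r hr)), hcount m, hcntD r hr]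
    have h2 := Nat.nth_count hPnew
    rw [hcnt] at h2
    conv_lhs => rw [hceq]
    exact h2
  -- combined splitting identity for powers
  have key : ∀ i n ℓ, ℓ < δ ^ i →
      c (δ ^ i * n + ℓ) = b ^ i * c n + c ℓ ∧
      (Nat.digits b (c (δ ^ i * n + ℓ))).sum
        = (Nat.digits b (c n)).sum + (Nat.digits b (c ℓ)).sum := by
    intro i
    induction i with
    | zero =>
      intro n ℓ hℓ
      have : ℓ = 0 := by simpa using hℓ
      subst this
      simp [hc0]
    | succ i ih =>
      intro n ℓ hℓ
      have hr : ℓ % δ < δ := Nat.mod_lt _ hδpos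
      have hq : ℓ / δ < δ ^ i := by
        rw [Nat.div_lt_iff_lt_mul hδpos]
        calc ℓ < δ ^ (i + 1) := hℓ
          _ = δ ^ i * δ := pow_succ δ i
      have hdm : δ * (ℓ / δ) + ℓ % δ = ℓ := Nat.div_add_mod ℓ δ
      have e1 : δ ^ (i + 1) * n + ℓ = δ * (δ ^ i * n + ℓ / δ) + ℓ % δ := by
        conv_lhs => rw [← hdm]
        ring
      obtain ⟨ihc, ihs⟩ := ih n (ℓ / δ) hq
      have b1 := base (δ ^ i * n + ℓ / δ) (ℓ % δ) hr
      have b2 := base (ℓ / δ) (ℓ % δ) hr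
      have hcℓ : c ℓ = b * c (ℓ / δ) + c (ℓ % δ) := by
        conv_lhs => rw [← hdm]
        exact b2
      constructor
      · rw [e1, b1, ihc, hcℓ]; ring
      · rw [e1, b1, hcℓ]
        have s1 : (Nat.digits b (b * c (δ ^ i * n + ℓ / δ) + c (ℓ % δ))).sum
            = (Nat.digits b (c (δ ^ i * n + ℓ / δ))).sum + c (ℓ % δ) :=
          sum_base hb1 (hclt _ hr)
        have s2 : (Nat.digits b (b * c (ℓ / δ) + c (ℓ % δ))).sum
            = (Nat.digits b (c (ℓ / δ))).sum + c (ℓ % δ) :=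
          sum_base hb1 (hclt _ hr)
        rw [s1, s2, ihs]
        ring
  -- now the analytic part
  refine ⟨2, by norm_num, ?_⟩
  intro i N hi hN α β
  set Δ : ℕ := δ ^ i with hΔdef
  set F : ℕ → ℂ := fun k => eR (α * (c k : ℝ) + β * ((Nat.digits b (c k)).sum : ℝ)) with hF
  set G : ℕ → ℂ := fun k =>
    eR ((b : ℝ) ^ i * α * (c k : ℝ) + β * ((Nat.digits b (c k)).sum : ℝ)) with hG
  set M : ℕ := N / Δ with hMdef
  have hΔpos : 0 < Δ := pow_pos hδpos i
  have hsplit : ∀ n ℓ, ℓ < Δ → F (Δ * n + ℓ) = G n * F ℓ := by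
    intro n ℓ h
    obtain ⟨h1, h2⟩ := key i n ℓ h
    rw [hF, hG]
    simp only
    rw [← eR_add]
    congr 1
    rw [h1] at h2
    rw [h1, h2]
    push_cast
    ring
  have hprod : ∀ m : ℕ, ∑ k ∈ Finset.range (Δ * m), F k
      = (∑ n ∈ Finset.range m, G n) * (∑ l ∈ Finset.range Δ, F l) := by
    intro m
    induction m with
    | zero => simp
    | succ m ih =>
      rw [Nat.mul_succ, Finset.sum_range_add, ih, Finset.sum_range_succ, add_mul]
      congr 1
      rw [Finset.mul_sum]
      exact Finset.sum_congr rfl fun ℓ hℓ => hsplit m ℓ (Finset.mem_range.mp hℓ)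
  set A : ℂ := ∑ n ∈ Finset.range M, G n with hA
  set B : ℂ := ∑ l ∈ Finset.range Δ, F l with hB
  set t : ℕ := N % Δ with ht
  have hNeq : N = Δ * M + t := by rw [hMdef, ht]; exact (Nat.div_add_mod N Δ).symm
  have htΔ : t < Δ := Nat.mod_lt _ hΔpos
  have hSn : ∑ k ∈ Finset.range N, F k
      = A * B + ∑ k ∈ Finset.range t, F (Δ * M + k) := by
    calc ∑ k ∈ Finset.range N, F k = ∑ k ∈ Finset.range (Δ * M + t), F k := by rw [← hNeq]
      _ = ∑ k ∈ Finset.range (Δ * M), F k + ∑ k ∈ Finset.range t, F (Δ * M + k) :=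
          Finset.sum_range_add _ _ _
      _ = _ := by rw [hprod M]
  have hnF : ∀ k, ‖F k‖ = 1 := fun k => norm_eR _
  have hnG : ∀ k, ‖G k‖ = 1 := fun k => norm_eR _
  have hnA : ‖A‖ ≤ (M : ℝ) := by
    calc ‖A‖ ≤ ∑ n ∈ Finset.range M, ‖G n‖ := norm_sum_le _ _
      _ = (M : ℝ) := by simp [hnG]
  have hnB : ‖B‖ ≤ (Δ : ℝ) := by
    calc ‖B‖ ≤ ∑ l ∈ Finset.range Δ, ‖F l‖ := norm_sum_le _ _
      _ = (Δ : ℝ) := by simp [hnF]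
  have hnR : ‖∑ k ∈ Finset.range t, F (Δ * M + k)‖ ≤ (t : ℝ) := by
    calc ‖∑ k ∈ Finset.range t, F (Δ * M + k)‖
        ≤ ∑ k ∈ Finset.range t, ‖F (Δ * M + k)‖ := norm_sum_le _ _
      _ = (t : ℝ) := by simp [hnF]
  have hNpos : (0 : ℝ) < (N : ℝ) := by exact_mod_cast Nat.lt_of_lt_of_le Nat.zero_lt_one hN
  -- algebraic identity
  have hid : (N : ℂ)⁻¹ * (∑ k ∈ Finset.range N, F k) - ((M : ℂ)⁻¹ * A) * ((Δ : ℂ)⁻¹ * B)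
      = (N : ℂ)⁻¹ * (∑ k ∈ Finset.range t, F (Δ * M + k))
        + ((N : ℂ)⁻¹ - ((M : ℂ) * (Δ : ℂ))⁻¹) * (A * B) := by
    rw [hSn, mul_inv]
    ring
  have hgoal : ‖(N : ℂ)⁻¹ * (∑ k ∈ Finset.range N, F k)
      - ((M : ℂ)⁻¹ * A) * ((Δ : ℂ)⁻¹ * B)‖ ≤ 2 * (Δ : ℝ) / (N : ℝ) := by
    rw [hid]
    have hterm1 : ‖(N : ℂ)⁻¹ * (∑ k ∈ Finset.range t, F (Δ * M + k))‖ ≤ (t : ℝ) / (N : ℝ) := by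
      rw [norm_mul, norm_inv, Complex.norm_natCast, div_eq_inv_mul]
      gcongr
    have hterm2 : ‖((N : ℂ)⁻¹ - ((M : ℂ) * (Δ : ℂ))⁻¹) * (A * B)‖ ≤ (t : ℝ) / (N : ℝ) := by
      have hcast : (N : ℂ)⁻¹ - ((M : ℂ) * (Δ : ℂ))⁻¹
          = (((N : ℝ)⁻¹ - ((M : ℝ) * (Δ : ℝ))⁻¹ : ℝ) : ℂ) := by push_cast; ring
      rw [norm_mul, hcast, Complex.norm_real, Real.norm_eq_abs]
      rcases Nat.eq_zero_or_pos M with hM0 | hMpos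
      · have hA0 : ‖A‖ = 0 := by simp [hA, hM0]
        rw [norm_mul, hA0, zero_mul, mul_zero]
        positivity
      · have hMr : (0 : ℝ) < (M : ℝ) := by exact_mod_cast hMpos
        have hΔr : (0 : ℝ) < (Δ : ℝ) := by exact_mod_cast hΔpos
        have hMΔN : (M : ℝ) * (Δ : ℝ) ≤ (N : ℝ) := by
          have h1 : Δ * M ≤ N := by omega
          calc (M : ℝ) * (Δ : ℝ) = ((Δ * M : ℕ) : ℝ) := by push_cast; ring
            _ ≤ (N : ℝ) := by exact_mod_cast h1
        have hinv : (N : ℝ)⁻¹ ≤ ((M : ℝ) * (Δ : ℝ))⁻¹ := by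
          apply inv_anti₀ (mul_pos hMr hΔr) hMΔN
        have habs : |(N : ℝ)⁻¹ - ((M : ℝ) * (Δ : ℝ))⁻¹|
            = ((M : ℝ) * (Δ : ℝ))⁻¹ - (N : ℝ)⁻¹ := by
          rw [abs_sub_comm, abs_of_nonneg (by linarith)]
        rw [habs]
        have h2 : ‖A * B‖ ≤ (M : ℝ) * (Δ : ℝ) := by
          rw [norm_mul]
          exact mul_le_mul hnA hnB (norm_nonneg _) (Nat.cast_nonneg _)
        calc (((M : ℝ) * (Δ : ℝ))⁻¹ - (N : ℝ)⁻¹) * ‖A * B‖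
            ≤ (((M : ℝ) * (Δ : ℝ))⁻¹ - (N : ℝ)⁻¹) * ((M : ℝ) * (Δ : ℝ)) :=
              mul_le_mul_of_nonneg_left h2 (by linarith)
          _ = ((N : ℝ) - (M : ℝ) * (Δ : ℝ)) / (N : ℝ) := by
              field_simp
          _ = (t : ℝ) / (N : ℝ) := by
              congr 1
              have hc : (N : ℝ) = (Δ : ℝ) * (M : ℝ) + (t : ℝ) := by exact_mod_cast hNeq
              linarith
    calc ‖(N : ℂ)⁻¹ * (∑ k ∈ Finset.range t, F (Δ * M + k))
          + ((N : ℂ)⁻¹ - ((M : ℂ) * (Δ : ℂ))⁻¹) * (A * B)‖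
        ≤ (t : ℝ) / (N : ℝ) + (t : ℝ) / (N : ℝ) :=
          le_trans (norm_add_le _ _) (add_le_add hterm1 hterm2)
      _ ≤ 2 * (Δ : ℝ) / (N : ℝ) := by
          have ht' : (t : ℝ) ≤ (Δ : ℝ) := by exact_mod_cast le_of_lt htΔ
          rw [← add_div]
          gcongr
          linarith
  -- conclude, matching the cast forms in the statement
  have hcast1 : ((N / D.card ^ i : ℕ) : ℂ) = (M : ℂ) := by rw [hMdef, hΔdef, hδ]
  have hcast2 : ((D.card ^ i : ℕ) : ℂ) = (Δ : ℂ) := by rw [hΔdef, hδ]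
  have hcast3 : (D.card : ℝ) ^ i = (Δ : ℝ) := by rw [hΔdef, hδ]; push_cast; ring
  calc _ ≤ 2 * (Δ : ℝ) / (N : ℝ) := hgoal
    _ = 2 * (D.card : ℝ) ^ i / (N : ℝ) := by rw [hcast3]
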